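/- arXiv:2601.20756 — 4 statements merged into one kernel-verified Lean document; each statement's English description precedes it below -/
import Mathlib

section
/- (Marginal posterior as conditional expectation) Let π be a probability measure on a separable Hilbert space H supported in the Cameron–Martin space of a trace-class covariance C, let π^y be the posterior measure with dπ^y/dπ (x_0) proportional to exp(-Φ(x_0)), and let π_t and π^y_t denote the laws of X_t when the OU process dX_t = -(1/2)X_t dt + sqrt(C)dW_t is started from π and π^y respectively. Then π^y_t is absolutely continuous with respect to π_t, and dπ^y_t/dπ_t (x) is proportional (with constant E_π[exp(-Φ(X_0))]^{-1}) to E_π[exp(-Φ(X_0)) | X_t = x]. -/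
open MeasureTheory ProbabilityTheory Real
open scoped ENNReal RealInnerProductSpace

noncomputable section

variable {H : Type*} [NormedAddCommGroup H] [InnerProductSpace ℝ H] [CompleteSpace H]
  [SecondCountableTopology H] [MeasurableSpace H] [BorelSpace H]

/-- A measure on a Hilbert space is Gaussian with mean `m` and covariance `C` if all of its
one-dimensional projections are Gaussian with the corresponding mean and variance. -/
def IsGaussianMeasure (μ : Measure H) (m : H) (C : H →L[ℝ] H) : Prop :=
  IsProbabilityMeasure μ ∧
    ∀ l : H →L[ℝ] ℝ,
      μ.map l = gaussianReal (l m)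
        (Real.toNNReal ⟪C ((InnerProductSpace.toDual ℝ H).symm l),
          (InnerProductSpace.toDual ℝ H).symm l⟫)

/-- A bounded operator is positive if `⟪C x, x⟫ ≥ 0` for all `x`. -/
def IsPositiveOp (C : H →L[ℝ] H) : Prop := ∀ x, 0 ≤ ⟪C x, x⟫

/-- A positive operator is trace class if the trace along some Hilbert basis is finite. -/
def IsTraceClassOp (C : H →L[ℝ] H) : Prop :=
  ∃ b : HilbertBasis ℕ ℝ H, Summable fun i => ⟪C (b i), b i⟫

/-- **Marginal posterior as conditional expectation.**
Let `prior` be supported in (a ball of) the Cameron–Martin space `√C(H)` of the trace-class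
covariance `C`, let `π^y = prior · ξ⁻¹exp(-Φ)` be the posterior, and let `π_t`, `π^y_t` be the
laws of the OU process `dX = -(1/2)X dt + √C dW` at time `t` started from `prior` and `π^y`,
i.e. the images of `prior` and `π^y` under the Gaussian transition kernel
`κ x₀ = N(e^{-t/2}x₀, (1-e^{-t})C)`. If `m` is a version of the conditional expectation
`E_prior[exp (-Φ(X₀)) | X_t = ·]` (w.r.t. the joint law `prior ⊗ₘ κ`), then `π^y_t ≪ π_t` with
`dπ^y_t/dπ_t (x) = ξ⁻¹ m x`, where `ξ = E_prior[exp (-Φ(X₀))]`. -/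
theorem marginal_posterior_density
    (C sqrtC : H →L[ℝ] H)
    (hCsa : IsSelfAdjoint C) (hCpos : IsPositiveOp C) (hCtr : IsTraceClassOp C)
    (hsqrt : sqrtC.comp sqrtC = C)
    (t : ℝ) (ht : 0 < t)
    (prior : Measure H) [IsProbabilityMeasure prior]
    -- the support of the prior is contained in a ball of the Cameron–Martin space of `C`
    (R : ℝ) (hsupp : ∀ᵐ x₀ ∂prior, ∃ w : H, sqrtC w = x₀ ∧ ‖w‖ ≤ R)
    (Φ : H → ℝ) (hΦ : Measurable Φ)
    (ξ : ℝ) (hξ : ξ = ∫ x₀, Real.exp (-Φ x₀) ∂prior) (hξpos : 0 < ξ)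
    (hint : Integrable (fun x₀ => Real.exp (-Φ x₀)) prior)
    -- the OU transition kernel at time `t`
    (κ : Kernel H H) [IsMarkovKernel κ]
    (hκ : ∀ x₀, IsGaussianMeasure (κ x₀)
      (Real.exp (-t / 2) • x₀) ((1 - Real.exp (-t)) • C))
    -- `m` is a version of `E_prior[exp (-Φ(X₀)) | X_t = ·]`
    (m : H → ℝ) (hm : Measurable m)
    (hmcond : (fun p : H × H => m p.2) =ᵐ[prior.compProd κ]
      (prior.compProd κ)[fun p : H × H => Real.exp (-Φ p.1) |
        MeasurableSpace.comap Prod.snd inferInstance]) :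
    (prior.withDensity fun x₀ => ENNReal.ofReal (ξ⁻¹ * Real.exp (-Φ x₀))).bind κ ≪
        prior.bind κ ∧
      (prior.withDensity fun x₀ => ENNReal.ofReal (ξ⁻¹ * Real.exp (-Φ x₀))).bind κ =
        (prior.bind κ).withDensity fun x => ENNReal.ofReal (ξ⁻¹ * m x) := by
  classical
  set ρ := prior.compProd κ with hρdef
  have hξinv : (0:ℝ) ≤ ξ⁻¹ := inv_nonneg.mpr hξpos.le
  -- measurable space comparison
  have hmle : MeasurableSpace.comap (Prod.snd : H × H → H) inferInstance ≤
      (inferInstance : MeasurableSpace (H × H)) := measurable_snd.comap_le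
  -- integrability of exp(-Φ(p.1)) on the joint law
  have hexp_meas : Measurable fun x₀ : H => Real.exp (-Φ x₀) := (hΦ.neg).exp
  have hfst : ρ.map Prod.fst = prior := Measure.fst_compProd prior κ
  have hf : Integrable (fun p : H × H => Real.exp (-Φ p.1)) ρ := by
    have h1 : Integrable (fun x₀ => Real.exp (-Φ x₀)) (ρ.map Prod.fst) := hfst ▸ hint
    exact (integrable_map_measure hexp_meas.aestronglyMeasurable
      measurable_fst.aemeasurable).mp h1
  -- nonnegativity and integrability of m ∘ snd
  have hm_nonneg : 0 ≤ᵐ[ρ] fun p : H × H => m p.2 := by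
    have hcond_nonneg : 0 ≤ᵐ[ρ]
        ρ[fun p : H × H => Real.exp (-Φ p.1) |
          MeasurableSpace.comap Prod.snd inferInstance] :=
      condExp_nonneg (Filter.Eventually.of_forall fun p => (Real.exp_pos _).le)
    filter_upwards [hmcond, hcond_nonneg] with p h1 h2
    rw [h1]; exact h2
  have hm_int : Integrable (fun p : H × H => m p.2) ρ :=
    integrable_condExp.congr hmcond.symm
  -- identification of the pushforward
  have hsnd : prior.bind κ = ρ.map Prod.snd := by
    ext s hs
    rw [Measure.bind_apply hs κ.measurable.aemeasurable, Measure.map_apply measurable_snd hs,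
      Measure.compProd_apply (measurable_snd hs)]
    rfl
  -- the core identity on preimages
  have key : ∀ s : Set H, MeasurableSet s →
      ∫⁻ p in Prod.snd ⁻¹' s, ENNReal.ofReal (Real.exp (-Φ p.1)) ∂ρ =
      ∫⁻ p in Prod.snd ⁻¹' s, ENNReal.ofReal (m p.2) ∂ρ := by
    intro s hs
    have hA : MeasurableSet[MeasurableSpace.comap (Prod.snd : H × H → H) inferInstance]
        (Prod.snd ⁻¹' s) := ⟨s, hs, rfl⟩
    have hAm : MeasurableSet (Prod.snd ⁻¹' s : Set (H × H)) := measurable_snd hs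
    have hint_eq : ∫ p in Prod.snd ⁻¹' s, Real.exp (-Φ p.1) ∂ρ =
        ∫ p in Prod.snd ⁻¹' s, m p.2 ∂ρ := by
      rw [← setIntegral_condExp hmle hf hA]
      exact (setIntegral_congr_ae hAm (hmcond.mono fun p hp _ => hp)).symm
    calc ∫⁻ p in Prod.snd ⁻¹' s, ENNReal.ofReal (Real.exp (-Φ p.1)) ∂ρ
        = ENNReal.ofReal (∫ p in Prod.snd ⁻¹' s, Real.exp (-Φ p.1) ∂ρ) :=
          (ofReal_integral_eq_lintegral_ofReal (hf.restrict)
            (Filter.Eventually.of_forall fun p => (Real.exp_pos _).le)).symm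
      _ = ENNReal.ofReal (∫ p in Prod.snd ⁻¹' s, m p.2 ∂ρ) := by rw [hint_eq]
      _ = ∫⁻ p in Prod.snd ⁻¹' s, ENNReal.ofReal (m p.2) ∂ρ :=
          ofReal_integral_eq_lintegral_ofReal (hm_int.restrict)
            (ae_restrict_of_ae hm_nonneg)
  -- main equality
  have hg_meas : Measurable fun x₀ : H => ENNReal.ofReal (ξ⁻¹ * Real.exp (-Φ x₀)) :=
    ((measurable_const.mul hexp_meas)).ennreal_ofReal
  have heq : (prior.withDensity fun x₀ => ENNReal.ofReal (ξ⁻¹ * Real.exp (-Φ x₀))).bind κ =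
      (prior.bind κ).withDensity fun x => ENNReal.ofReal (ξ⁻¹ * m x) := by
    ext s hs
    rw [Measure.bind_apply hs κ.measurable.aemeasurable,
      lintegral_withDensity_eq_lintegral_mul prior hg_meas (κ.measurable_coe hs),
      withDensity_apply _ hs, hsnd,
      setLIntegral_map (f := fun x => ENNReal.ofReal (ξ⁻¹ * m x)) hs
        ((measurable_const.mul hm).ennreal_ofReal) measurable_snd]
    have hL : ∫⁻ x₀, (fun x₀ => ENNReal.ofReal (ξ⁻¹ * Real.exp (-Φ x₀))) x₀ * κ x₀ s ∂prior =
        ENNReal.ofReal ξ⁻¹ * ∫⁻ p in Prod.snd ⁻¹' s, ENNReal.ofReal (Real.exp (-Φ p.1)) ∂ρ := by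
      have h1 : ∀ x₀, ENNReal.ofReal (ξ⁻¹ * Real.exp (-Φ x₀)) * κ x₀ s =
          ENNReal.ofReal ξ⁻¹ * (ENNReal.ofReal (Real.exp (-Φ x₀)) * κ x₀ s) := fun x₀ => by
        rw [ENNReal.ofReal_mul hξinv, mul_assoc]
      simp only [h1]
      rw [lintegral_const_mul (f := fun x₀ => ENNReal.ofReal (Real.exp (-Φ x₀)) * κ x₀ s) _
        (hexp_meas.ennreal_ofReal.mul (κ.measurable_coe hs))]
      congr 1
      have hps : Prod.snd ⁻¹' s = (Set.univ : Set H) ×ˢ s := by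
        ext p; simp
      rw [hps, Measure.setLIntegral_compProd
        (μ := prior) (κ := κ) (f := fun p : H × H => ENNReal.ofReal (Real.exp (-Φ p.1)))
        ((hexp_meas.comp measurable_fst).ennreal_ofReal) MeasurableSet.univ hs]
      rw [Measure.restrict_univ]
      refine (lintegral_congr fun x₀ => ?_).symm
      exact setLIntegral_const s (ENNReal.ofReal (Real.exp (-Φ x₀)))
    have hR : ∫⁻ p in Prod.snd ⁻¹' s, ENNReal.ofReal (ξ⁻¹ * m p.2) ∂ρ =
        ENNReal.ofReal ξ⁻¹ * ∫⁻ p in Prod.snd ⁻¹' s, ENNReal.ofReal (m p.2) ∂ρ := by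
      have hmm : Measurable fun p : H × H => ENNReal.ofReal (m p.2) :=
        (hm.comp measurable_snd).ennreal_ofReal
      simp_rw [ENNReal.ofReal_mul hξinv]
      rw [lintegral_const_mul _ hmm]
    simp only [Pi.mul_apply]
    rw [hL, hR, key s hs]
  exact ⟨heq ▸ withDensity_absolutelyContinuous (prior.bind κ)
    (fun x => ENNReal.ofReal (ξ⁻¹ * m x)), heq⟩
end
end

section
/- (Denoising score matching identity for guidance) Let X_t = e^{-t/2} X_0 + sqrt(1-e^{-t}) ε with ε ~ N(0,C) independent of (X_0, Y), and let s(t,x) and s^y(t,x) be the unconditional and conditional scores defined via the posterior means. Then for any measurable u : [0,T] × H × Y → H with finite second moments, E[ || s^Y(t,X_t) - (s(t,X_t) + u(t,X_t,Y)) ||^2 ] = E[ || (1-e^{-t})^{-1}(X_t - e^{-t/2}X_0) + s(t,X_t) + u(t,X_t,Y) ||^2 ] + B, where B = - (e^{-t}/(1-e^{-t})^2) E[ || E[X_0 | X_t, Y] - X_0 ||^2 ] is independent of u. Hence, if B is finite, the minimizers of the two objectives coincide and the almost-surely unique minimizer is u*(t,x,y) = s^y(t,x) - s(t,x). -/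
open MeasureTheory ProbabilityTheory Real
open scoped ENNReal RealInnerProductSpace

noncomputable section

variable {H : Type*} [NormedAddCommGroup H] [InnerProductSpace ℝ H] [CompleteSpace H]
  [SecondCountableTopology H] [MeasurableSpace H] [BorelSpace H]

set_option linter.unusedSectionVars false in
theorem condexpL2_ae_eq_condexp'' {Ω : Type*} {m m0 : MeasurableSpace Ω} (hm : m ≤ m0)
    (μ : Measure Ω) [IsFiniteMeasure μ] {f : Ω → H} (hf : MemLp f 2 μ) :
    (condExpL2 H ℝ hm (hf.toLp f) : Ω → H) =ᵐ[μ] μ[f|m] := by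
  refine ae_eq_condExp_of_forall_setIntegral_eq hm (hf.integrable one_le_two)
    (fun s hs hμs => integrableOn_condExpL2_of_measure_ne_top hm hμs.ne _)
    (fun s hs hμs => ?_) (aestronglyMeasurable_condExpL2 hm _)
  rw [integral_condExpL2_eq hm _ hs hμs.ne]
  exact setIntegral_congr_ae (hm s hs) ((hf.coeFn_toLp).mono fun x hx _ => hx)

theorem integral_inner_condexp_sub_eq_zero' {Ω : Type*} {m m0 : MeasurableSpace Ω} (hm : m ≤ m0)
    (μ : Measure Ω) [IsFiniteMeasure μ] {f g : Ω → H} (hf : MemLp f 2 μ) (hg : MemLp g 2 μ)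
    (hgm : AEStronglyMeasurable[m] g μ) :
    ∫ ω, ⟪(μ[f|m]) ω - f ω, g ω⟫ ∂μ = 0 := by
  set F := hf.toLp f with hF
  set G := hg.toLp g with hG
  have hGm : AEStronglyMeasurable[m] (G : Ω → H) μ := hgm.congr (hg.coeFn_toLp).symm
  have key := inner_condExpL2_eq_inner_fun (𝕜 := ℝ) hm F G hGm
  rw [L2.inner_def, L2.inner_def] at key
  have hcd := condexpL2_ae_eq_condexp'' hm μ hf
  have e1 : ∫ ω, ⟪(μ[f|m]) ω, g ω⟫ ∂μ
      = ∫ a, ⟪(↑↑↑((condExpL2 H ℝ hm) F) : Ω → H) a, (G : Ω → H) a⟫ ∂μ := by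
    refine integral_congr_ae ?_
    filter_upwards [hcd, hg.coeFn_toLp] with ω h1 h2
    rw [h1, h2]
  have e2 : ∫ ω, ⟪f ω, g ω⟫ ∂μ = ∫ a, ⟪(F : Ω → H) a, (G : Ω → H) a⟫ ∂μ := by
    refine integral_congr_ae ?_
    filter_upwards [hf.coeFn_toLp, hg.coeFn_toLp] with ω h1 h2
    rw [h1, h2]
  have h1 : ∫ ω, ⟪(μ[f|m]) ω, g ω⟫ ∂μ = ∫ ω, ⟪f ω, g ω⟫ ∂μ := e1.trans (key.trans e2.symm)
  have hint1 : Integrable (fun ω => ⟪(μ[f|m]) ω, g ω⟫) μ := by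
    refine (L2.integrable_inner (𝕜 := ℝ) (↑(condExpL2 H ℝ hm F)) G).congr ?_
    filter_upwards [hcd, hg.coeFn_toLp] with ω h1 h2
    rw [h1, h2]
  have hint2 : Integrable (fun ω => ⟪f ω, g ω⟫) μ := by
    refine (L2.integrable_inner (𝕜 := ℝ) F G).congr ?_
    filter_upwards [hf.coeFn_toLp, hg.coeFn_toLp] with ω h1 h2
    rw [h1, h2]
  have : (fun ω => ⟪(μ[f|m]) ω - f ω, g ω⟫) =
      fun ω => ⟪(μ[f|m]) ω, g ω⟫ - ⟪f ω, g ω⟫ := by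
    funext ω; rw [inner_sub_left]
  rw [this, integral_sub hint1 hint2, h1, sub_self]


set_option maxHeartbeats 1000000 in
/-- **Denoising score matching identity for guidance (Supervised Guidance Training).**
Let `Xt = e^{-t/2} X0 + √(1-e^{-t}) ε` with `ε ~ N(0,C)` independent of `(X0, Y)`, and let
`s`, `sy` be the unconditional and conditional scores, defined through versions `m`, `mY` of
the posterior means `E[X0|Xt=·]` and `E[X0|Xt=·, Y=·]`. Then for any `u : H × E → H` with
finite second moment,
`E‖s^Y(t,Xt) - (s(t,Xt)+u(Xt,Y))‖² = E‖(1-e^{-t})⁻¹(Xt-e^{-t/2}X0)+s(t,Xt)+u(Xt,Y)‖² + B`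
with `B = -(e^{-t}/(1-e^{-t})²) E‖E[X0|Xt,Y] - X0‖²` independent of `u`; hence if `B` is
finite, the two objectives have the same minimisers, and the a.s.-unique minimiser is
`u* = s^y - s`. -/
theorem supervised_guidance_training_identity
    {Ω : Type*} [MeasurableSpace Ω] (P : Measure Ω) [IsProbabilityMeasure P]
    {E : Type*} [MeasurableSpace E]
    (C : H →L[ℝ] H)
    (t : ℝ) (ht : 0 < t)
    (X0 Xt ε : Ω → H) (Y : Ω → E)
    (hX0 : Measurable X0) (hε : Measurable ε) (hY : Measurable Y)
    (hεlaw : IsGaussianMeasure (P.map ε) 0 C)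
    (hindep : IndepFun (fun ω => (X0 ω, Y ω)) ε P)
    (hXt : Xt = fun ω => Real.exp (-t / 2) • X0 ω + Real.sqrt (1 - Real.exp (-t)) • ε ω)
    (m : H → H) (mY : H → E → H)
    (hm : (fun ω => m (Xt ω)) =ᵐ[P] P[X0 | MeasurableSpace.comap Xt inferInstance])
    (hmY : (fun ω => mY (Xt ω) (Y ω)) =ᵐ[P]
      P[X0 | MeasurableSpace.comap Xt inferInstance ⊔ MeasurableSpace.comap Y inferInstance])
    (s : H → H) (sy : H → E → H)
    (hs : ∀ x, s x = -((1 - Real.exp (-t))⁻¹ • (x - Real.exp (-t / 2) • m x)))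
    (hsy : ∀ x y, sy x y = -((1 - Real.exp (-t))⁻¹ • (x - Real.exp (-t / 2) • mY x y)))
    -- second-moment assumptions
    (hX0sq : Integrable (fun ω => ‖X0 ω‖ ^ 2) P)
    (hssq : Integrable (fun ω => ‖s (Xt ω)‖ ^ 2) P)
    (hsysq : Integrable (fun ω => ‖sy (Xt ω) (Y ω)‖ ^ 2) P)
    (hεsq : Integrable (fun ω => ‖ε ω‖ ^ 2) P)
    (u : H → E → H) (hu : Measurable fun p : H × E => u p.1 p.2)
    (husq : Integrable (fun ω => ‖u (Xt ω) (Y ω)‖ ^ 2) P)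
    (B : ℝ)
    (hB : B = -(Real.exp (-t) / (1 - Real.exp (-t)) ^ 2) *
      ∫ ω, ‖mY (Xt ω) (Y ω) - X0 ω‖ ^ 2 ∂P) :
    (∫ ω, ‖sy (Xt ω) (Y ω) - (s (Xt ω) + u (Xt ω) (Y ω))‖ ^ 2 ∂P =
        (∫ ω, ‖(1 - Real.exp (-t))⁻¹ • (Xt ω - Real.exp (-t / 2) • X0 ω) +
          s (Xt ω) + u (Xt ω) (Y ω)‖ ^ 2 ∂P) + B) ∧
      (∫ ω, ‖(1 - Real.exp (-t))⁻¹ • (Xt ω - Real.exp (-t / 2) • X0 ω) +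
          s (Xt ω) + (sy (Xt ω) (Y ω) - s (Xt ω))‖ ^ 2 ∂P ≤
        ∫ ω, ‖(1 - Real.exp (-t))⁻¹ • (Xt ω - Real.exp (-t / 2) • X0 ω) +
          s (Xt ω) + u (Xt ω) (Y ω)‖ ^ 2 ∂P) ∧
      (∫ ω, ‖(1 - Real.exp (-t))⁻¹ • (Xt ω - Real.exp (-t / 2) • X0 ω) +
          s (Xt ω) + u (Xt ω) (Y ω)‖ ^ 2 ∂P =
        ∫ ω, ‖(1 - Real.exp (-t))⁻¹ • (Xt ω - Real.exp (-t / 2) • X0 ω) +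
          s (Xt ω) + (sy (Xt ω) (Y ω) - s (Xt ω))‖ ^ 2 ∂P →
        (fun ω => u (Xt ω) (Y ω)) =ᵐ[P] fun ω => sy (Xt ω) (Y ω) - s (Xt ω)) := by
  classical
  set a : ℝ := (1 - Real.exp (-t))⁻¹ with ha
  set b : ℝ := Real.exp (-t / 2) with hb
  have hXtm : Measurable Xt := by
    rw [hXt]; exact (hX0.const_smul b).add (hε.const_smul _)
  set 𝔪X : MeasurableSpace Ω := MeasurableSpace.comap Xt inferInstance with h𝔪X
  set 𝔪 : MeasurableSpace Ω :=
    MeasurableSpace.comap Xt inferInstance ⊔ MeasurableSpace.comap Y inferInstance with h𝔪def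
  have h𝔪X_le : 𝔪X ≤ _ := hXtm.comap_le
  have h𝔪 : 𝔪 ≤ _ := sup_le hXtm.comap_le hY.comap_le
  have hXt𝔪 : Measurable[𝔪] Xt := Measurable.of_comap_le le_sup_left
  have hY𝔪 : Measurable[𝔪] Y := Measurable.of_comap_le le_sup_right
  have hu𝔪 : Measurable[𝔪] (fun ω => u (Xt ω) (Y ω)) := hu.comp (hXt𝔪.prodMk hY𝔪)
  -- a.e. strong measurability pieces
  have hmY'sm : AEStronglyMeasurable[𝔪] (fun ω => (P[X0|𝔪]) ω) P :=
    ⟨_, stronglyMeasurable_condExp, Filter.EventuallyEq.rfl⟩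
  have hm'sm : AEStronglyMeasurable[𝔪X] (fun ω => (P[X0|𝔪X]) ω) P :=
    ⟨_, stronglyMeasurable_condExp, Filter.EventuallyEq.rfl⟩
  have hXtsm : AEStronglyMeasurable[𝔪X] Xt P :=
    ⟨Xt, (Measurable.of_comap_le le_rfl).stronglyMeasurable, Filter.EventuallyEq.rfl⟩
  have hXtsm' : AEStronglyMeasurable[𝔪] Xt P :=
    ⟨Xt, hXt𝔪.stronglyMeasurable, Filter.EventuallyEq.rfl⟩
  have hsy𝔪 : AEStronglyMeasurable[𝔪] (fun ω => sy (Xt ω) (Y ω)) P := by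
    have h0 : AEStronglyMeasurable[𝔪] (fun ω => -(a • (Xt ω - b • (P[X0|𝔪]) ω))) P :=
      ((hXtsm'.sub (hmY'sm.const_smul b)).const_smul a).neg
    refine h0.congr ?_
    filter_upwards [hmY] with ω h
    rw [hsy, h]
  have hs𝔪X : AEStronglyMeasurable[𝔪X] (fun ω => s (Xt ω)) P := by
    have h0 : AEStronglyMeasurable[𝔪X] (fun ω => -(a • (Xt ω - b • (P[X0|𝔪X]) ω))) P :=
      ((hXtsm.sub (hm'sm.const_smul b)).const_smul a).neg
    refine h0.congr ?_
    filter_upwards [hm] with ω h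
    rw [hs, h]
  have hs𝔪 : AEStronglyMeasurable[𝔪] (fun ω => s (Xt ω)) P := hs𝔪X.mono le_sup_left
  have hu𝔪' : AEStronglyMeasurable[𝔪] (fun ω => u (Xt ω) (Y ω)) P :=
    ⟨_, hu𝔪.stronglyMeasurable, Filter.EventuallyEq.rfl⟩
  have toASM := fun {f : Ω → H} (hf : AEStronglyMeasurable[𝔪] f P) => hf.mono h𝔪
  -- MemLp facts
  have hX0L2 : MemLp X0 2 P :=
    (memLp_two_iff_integrable_sq_norm hX0.aestronglyMeasurable).mpr hX0sq
  have hsyL2 : MemLp (fun ω => sy (Xt ω) (Y ω)) 2 P :=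
    (memLp_two_iff_integrable_sq_norm (toASM hsy𝔪)).mpr hsysq
  have hsL2 : MemLp (fun ω => s (Xt ω)) 2 P :=
    (memLp_two_iff_integrable_sq_norm (toASM hs𝔪)).mpr hssq
  have huL2 : MemLp (fun ω => u (Xt ω) (Y ω)) 2 P :=
    (memLp_two_iff_integrable_sq_norm (toASM hu𝔪')).mpr husq
  have hεL2 : MemLp ε 2 P :=
    (memLp_two_iff_integrable_sq_norm hε.aestronglyMeasurable).mpr hεsq
  set c : ℝ := a * b with hc
  set W : Ω → H := fun ω => c • (mY (Xt ω) (Y ω) - X0 ω) with hW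
  set D : Ω → H := fun ω => s (Xt ω) + u (Xt ω) (Y ω) - sy (Xt ω) (Y ω) with hD
  -- pointwise identities
  have hZ : ∀ ω, a • (Xt ω - b • X0 ω) = (a * Real.sqrt (1 - Real.exp (-t))) • ε ω := by
    intro ω; simp only [hXt]; module
  have hWZ : ∀ ω, W ω = a • (Xt ω - b • X0 ω) + sy (Xt ω) (Y ω) := by
    intro ω
    show (a * b) • _ = _
    rw [hsy]; module
  have hBD : ∀ ω, a • (Xt ω - b • X0 ω) + s (Xt ω) + u (Xt ω) (Y ω) = W ω + D ω := by
    intro ω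
    show _ = (a * b) • _ + (s (Xt ω) + u (Xt ω) (Y ω) - sy (Xt ω) (Y ω))
    rw [hsy]; module
  have hA : ∀ ω, sy (Xt ω) (Y ω) - (s (Xt ω) + u (Xt ω) (Y ω)) = -D ω := by
    intro ω
    show _ = -(s (Xt ω) + u (Xt ω) (Y ω) - sy (Xt ω) (Y ω))
    abel
  have hWstar : ∀ ω, a • (Xt ω - b • X0 ω) + s (Xt ω) + (sy (Xt ω) (Y ω) - s (Xt ω)) = W ω := by
    intro ω
    show _ = (a * b) • _
    rw [hsy]; module
  -- MemLp for W and D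
  have hWL2 : MemLp W 2 P := by
    have : W = fun ω => (a * Real.sqrt (1 - Real.exp (-t))) • ε ω + sy (Xt ω) (Y ω) := by
      funext ω; rw [hWZ ω, hZ ω]
    rw [this]
    exact (hεL2.const_smul _).add hsyL2
  have hDL2 : MemLp D 2 P := (hsL2.add huL2).sub hsyL2
  have hD𝔪 : AEStronglyMeasurable[𝔪] D P := (hs𝔪.add hu𝔪').sub hsy𝔪
  have hW2 : Integrable (fun ω => ‖W ω‖ ^ 2) P :=
    (memLp_two_iff_integrable_sq_norm hWL2.aestronglyMeasurable).mp hWL2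
  have hD2 : Integrable (fun ω => ‖D ω‖ ^ 2) P :=
    (memLp_two_iff_integrable_sq_norm hDL2.aestronglyMeasurable).mp hDL2
  -- orthogonality
  have horth : ∫ ω, ⟪W ω, D ω⟫ ∂P = 0 := by
    have h0 : ∫ ω, ⟪(P[X0|𝔪]) ω - X0 ω, D ω⟫ ∂P = 0 :=
      integral_inner_condexp_sub_eq_zero' h𝔪 P hX0L2 hDL2 hD𝔪
    have h1 : ∫ ω, ⟪W ω, D ω⟫ ∂P = ∫ ω, c * ⟪(P[X0|𝔪]) ω - X0 ω, D ω⟫ ∂P := by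
      refine integral_congr_ae ?_
      filter_upwards [hmY] with ω h
      show ⟪c • (mY (Xt ω) (Y ω) - X0 ω), D ω⟫ = _
      rw [h, real_inner_smul_left]
    rw [h1, integral_const_mul, h0, mul_zero]
  -- integrability of the inner product
  have hWD : Integrable (fun ω => ⟪W ω, D ω⟫) P := by
    refine Integrable.mono' (hW2.add hD2)
      (hWL2.aestronglyMeasurable.inner hDL2.aestronglyMeasurable) (ae_of_all _ fun ω => ?_)
    have h1 : ‖⟪W ω, D ω⟫‖ ≤ ‖W ω‖ * ‖D ω‖ := norm_inner_le_norm _ _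
    have h2 : ‖W ω‖ * ‖D ω‖ ≤ ‖W ω‖ ^ 2 + ‖D ω‖ ^ 2 := by
      nlinarith [sq_nonneg (‖W ω‖ - ‖D ω‖), norm_nonneg (W ω), norm_nonneg (D ω)]
    exact h1.trans h2
  -- Pythagoras
  have hpyth : ∫ ω, ‖W ω + D ω‖ ^ 2 ∂P = ∫ ω, ‖W ω‖ ^ 2 ∂P + ∫ ω, ‖D ω‖ ^ 2 ∂P := by
    have hpt : (fun ω => ‖W ω + D ω‖ ^ 2) =
        fun ω => ‖W ω‖ ^ 2 + 2 * ⟪W ω, D ω⟫ + ‖D ω‖ ^ 2 := by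
      funext ω; exact norm_add_sq_real _ _
    have hWDi : Integrable (fun ω => 2 * ⟪W ω, D ω⟫) P := hWD.const_mul 2
    have h12 : Integrable (fun ω => ‖W ω‖ ^ 2 + 2 * ⟪W ω, D ω⟫) P := hW2.add hWDi
    rw [hpt, integral_add h12 hD2, integral_add hW2 hWDi, integral_const_mul, horth]
    ring
  -- ∫‖W‖² = -B
  have hbb : b ^ 2 = Real.exp (-t) := by
    rw [hb, sq, ← Real.exp_add]; congr 1; ring
  have hWB : ∫ ω, ‖W ω‖ ^ 2 ∂P = -B := by
    have hpt : (fun ω => ‖W ω‖ ^ 2) =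
        fun ω => c ^ 2 * ‖mY (Xt ω) (Y ω) - X0 ω‖ ^ 2 := by
      funext ω
      show ‖c • (mY (Xt ω) (Y ω) - X0 ω)‖ ^ 2 = _
      rw [norm_smul, mul_pow, Real.norm_eq_abs, sq_abs]
    rw [hpt, integral_const_mul, hB]
    have hc2 : c ^ 2 = Real.exp (-t) / (1 - Real.exp (-t)) ^ 2 := by
      rw [hc, mul_pow, hbb, ha, div_eq_mul_inv, ← inv_pow]; ring
    rw [hc2]; ring
  -- rewrite the three integrals in the goal
  have hI1 : ∫ ω, ‖sy (Xt ω) (Y ω) - (s (Xt ω) + u (Xt ω) (Y ω))‖ ^ 2 ∂P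
      = ∫ ω, ‖D ω‖ ^ 2 ∂P := by
    refine integral_congr_ae (ae_of_all _ fun ω => ?_)
    simp only []
    rw [hA ω, norm_neg]
  have hI2 : ∫ ω, ‖a • (Xt ω - b • X0 ω) + s (Xt ω) + u (Xt ω) (Y ω)‖ ^ 2 ∂P
      = ∫ ω, ‖W ω + D ω‖ ^ 2 ∂P := by
    refine integral_congr_ae (ae_of_all _ fun ω => ?_)
    simp only []
    rw [hBD ω]
  have hI3 : ∫ ω, ‖a • (Xt ω - b • X0 ω) + s (Xt ω) + (sy (Xt ω) (Y ω) - s (Xt ω))‖ ^ 2 ∂P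
      = ∫ ω, ‖W ω‖ ^ 2 ∂P := by
    refine integral_congr_ae (ae_of_all _ fun ω => ?_)
    simp only []
    rw [hWstar ω]
  refine ⟨?_, ?_, ?_⟩
  · rw [hI1, hI2, hpyth]
    linarith [hWB]
  · rw [hI2, hI3, hpyth]
    have : 0 ≤ ∫ ω, ‖D ω‖ ^ 2 ∂P := integral_nonneg fun ω => sq_nonneg _
    linarith
  · intro h
    rw [hI2, hI3, hpyth] at h
    have hD0 : ∫ ω, ‖D ω‖ ^ 2 ∂P = 0 := by linarith
    have hae : (fun ω => ‖D ω‖ ^ 2) =ᵐ[P] 0 :=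
      (integral_eq_zero_iff_of_nonneg (fun ω => sq_nonneg _) hD2).mp hD0
    filter_upwards [hae] with ω hω
    have hDz : D ω = 0 := by
      have : ‖D ω‖ = 0 := by
        have := hω
        simp only [Pi.zero_apply] at this
        nlinarith [norm_nonneg (D ω)]
      exact norm_eq_zero.mp this
    have : u (Xt ω) (Y ω) - (sy (Xt ω) (Y ω) - s (Xt ω)) = 0 := by
      rw [show u (Xt ω) (Y ω) - (sy (Xt ω) (Y ω) - s (Xt ω))
          = s (Xt ω) + u (Xt ω) (Y ω) - sy (Xt ω) (Y ω) from by abel]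
      exact hDz
    exact sub_eq_zero.mp this
end
end

section
/- (Bayes' theorem in function space) Let π be a probability (prior) measure on a Hilbert space H, π_0 a reference measure on an observation space Y, and suppose the conditional law π^f of y given f satisfies dπ^f/dπ_0 (y) = exp(-Φ(f,y)) for π-a.e. f, with Φ measurable and ξ(y) := E_{f ~ π}[exp(-Φ(f,y))] ∈ (0,∞) for π_0-a.e. y. Then for π_0-a.e. y, the posterior π^y (the regular conditional law of f given y) is absolutely continuous with respect to π with dπ^y/dπ (f) = ξ(y)^{-1} exp(-Φ(f, y)). -/
open MeasureTheory ProbabilityTheory Real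
open scoped ENNReal RealInnerProductSpace

noncomputable section

variable {H : Type*} [NormedAddCommGroup H] [InnerProductSpace ℝ H] [CompleteSpace H]
  [SecondCountableTopology H] [MeasurableSpace H] [BorelSpace H] [Nonempty H]

set_option maxHeartbeats 1000000 in
/-- **Bayes' theorem in function space (Dashti–Stuart).**
Let `prior` be a probability measure on a Hilbert space `H`, `π₀` a reference measure on an
observation space `E`, and suppose the conditional law `κ f` of `y` given `f` satisfies
`dκ f/dπ₀ (y) = exp(-Φ(f,y))` for `prior`-a.e. `f`, with `Φ` jointly measurable and
`ξ(y) = E_{f ~ prior}[exp(-Φ(f,y))] ∈ (0, ∞)` for `π₀`-a.e. `y`. Then for a.e. `y` (w.r.t.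
the marginal law of the observation), the posterior — the regular conditional law of `f`
given `y`, i.e. `condDistrib Prod.fst Prod.snd (prior ⊗ₘ κ)` — is absolutely continuous
w.r.t. `prior` with density `ξ(y)⁻¹ exp(-Φ(·, y))`. -/
theorem bayes_theorem_function_space
    {E : Type*} [MeasurableSpace E] [StandardBorelSpace E] [Nonempty E]
    (prior : Measure H) [IsProbabilityMeasure prior]
    (π₀ : Measure E) [SigmaFinite π₀]
    (Φ : H → E → ℝ) (hΦ : Measurable fun p : H × E => Φ p.1 p.2)
    -- the conditional law of the observation given `f`
    (κ : Kernel H E) [IsMarkovKernel κ]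
    (hκ : ∀ᵐ f ∂prior, κ f = π₀.withDensity fun y => ENNReal.ofReal (Real.exp (-Φ f y)))
    (ξ : E → ℝ) (hξ : ∀ y, ξ y = ∫ f, Real.exp (-Φ f y) ∂prior)
    (hξpos : ∀ᵐ y ∂π₀, 0 < ξ y)
    (hξfin : ∀ᵐ y ∂π₀, Integrable (fun f => Real.exp (-Φ f y)) prior) :
    ∀ᵐ y ∂((prior.compProd κ).map Prod.snd),
      condDistrib Prod.fst Prod.snd (prior.compProd κ) y ≪ prior ∧
        condDistrib Prod.fst Prod.snd (prior.compProd κ) y =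
          prior.withDensity fun f => ENNReal.ofReal ((ξ y)⁻¹ * Real.exp (-Φ f y)) := by
  classical
  -- the likelihood density
  set g : H → E → ℝ≥0∞ := fun f y => ENNReal.ofReal (Real.exp (-Φ f y)) with hg
  have hgmeas : Measurable (Function.uncurry g) := (hΦ.neg.exp).ennreal_ofReal
  have hgy : ∀ y : E, Measurable fun f => g f y := fun y => by
    simp only [hg]; fun_prop
  -- measurability of the normalising constant
  have hξmeas : Measurable ξ := by
    have hsm : StronglyMeasurable
        (Function.uncurry fun (y : E) (f : H) => Real.exp (-Φ f y)) :=
      Measurable.stronglyMeasurable (by fun_prop)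
    have : Measurable fun y => ∫ f, Real.exp (-Φ f y) ∂prior :=
      hsm.integral_prod_right.measurable
    exact (funext hξ : ξ = _) ▸ this
  -- the ENNReal-valued normalising constant
  set w : E → ℝ≥0∞ := fun y => ∫⁻ f, g f y ∂prior with hw
  have hwmeas : Measurable w := Measurable.lintegral_prod_left hgmeas
  -- the posterior density
  set d : E → H → ℝ≥0∞ := fun y f => ENNReal.ofReal ((ξ y)⁻¹ * Real.exp (-Φ f y)) with hd
  have hdmeas : Measurable (Function.uncurry d) := by
    simp only [hd]; fun_prop
  -- the "nice" version of κ
  set κ' : Kernel H E := Kernel.withDensity (Kernel.const H π₀) g with hκ'def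
  haveI : IsSFiniteKernel κ' :=
    Kernel.IsSFiniteKernel.withDensity _ (fun _ _ => ENNReal.ofReal_ne_top)
  have hκ'app : ∀ f, κ' f = π₀.withDensity (g f) := fun f => by
    rw [hκ'def, Kernel.withDensity_apply _ hgmeas, Kernel.const_apply]
  have hcomp : prior.compProd κ = prior.compProd κ' :=
    Measure.compProd_congr (by filter_upwards [hκ] with f hf; rw [hf, hκ'app])
  -- the candidate posterior kernel
  set η₀ : Kernel E H := Kernel.withDensity (Kernel.const E prior) d with hη₀def
  haveI : IsSFiniteKernel η₀ :=
    Kernel.IsSFiniteKernel.withDensity _ (fun _ _ => ENNReal.ofReal_ne_top)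
  have hη₀app : ∀ y, η₀ y = prior.withDensity (d y) := fun y => by
    rw [hη₀def, Kernel.withDensity_apply _ hdmeas, Kernel.const_apply]
  have hSmeas : MeasurableSet {y : E | η₀ y Set.univ = 1} :=
    (Kernel.measurable_coe η₀ MeasurableSet.univ) (measurableSet_singleton 1)
  set η : Kernel E H := Kernel.piecewise hSmeas η₀ (Kernel.const E prior) with hηdef
  haveI : IsMarkovKernel η := by
    constructor
    intro y
    rw [hηdef, Kernel.piecewise_apply]
    split_ifs with hy
    · exact ⟨hy⟩
    · rw [Kernel.const_apply]; infer_instance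
  -- a.e. identities on π₀
  have hwξ : ∀ᵐ y ∂π₀, w y = ENNReal.ofReal (ξ y) := by
    filter_upwards [hξfin] with y hy
    have : ENNReal.ofReal (∫ f, Real.exp (-Φ f y) ∂prior)
        = ∫⁻ f, ENNReal.ofReal (Real.exp (-Φ f y)) ∂prior :=
      ofReal_integral_eq_lintegral_ofReal hy (ae_of_all _ fun f => (Real.exp_pos _).le)
    rw [hξ y, this]
  have hη₀univ : ∀ᵐ y ∂π₀, η₀ y Set.univ = 1 := by
    filter_upwards [hwξ, hξpos] with y hwy hy
    rw [hη₀app y, withDensity_apply _ MeasurableSet.univ, setLIntegral_univ]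
    calc ∫⁻ f, d y f ∂prior
        = ∫⁻ f, ENNReal.ofReal (ξ y)⁻¹ * g f y ∂prior := by
          refine lintegral_congr fun f => ?_
          simp only [hd, hg]
          exact ENNReal.ofReal_mul (inv_nonneg.2 hy.le)
      _ = ENNReal.ofReal (ξ y)⁻¹ * w y := lintegral_const_mul _ (hgy y)
      _ = ENNReal.ofReal (ξ y)⁻¹ * ENNReal.ofReal (ξ y) := by rw [hwy]
      _ = 1 := by
          rw [← ENNReal.ofReal_mul (inv_nonneg.2 hy.le), inv_mul_cancel₀ hy.ne',
            ENNReal.ofReal_one]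
  have hηη₀ : ∀ᵐ y ∂π₀, η y = prior.withDensity (d y) := by
    filter_upwards [hη₀univ] with y hy
    rw [hηdef, Kernel.piecewise_apply,
      if_pos (show y ∈ {y : E | η₀ y Set.univ = 1} from hy), hη₀app]
  -- Fubini helper
  have fub : ∀ F : E × H → ℝ≥0∞, Measurable F →
      ∫⁻ f, ∫⁻ y, F (y, f) ∂π₀ ∂prior = ∫⁻ y, ∫⁻ f, F (y, f) ∂prior ∂π₀ := fun F hF =>
    lintegral_lintegral_swap ((hF.comp measurable_swap).aemeasurable)
  have hκ'set : ∀ (f : H) (t : Set E), MeasurableSet t →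
      κ' f t = ∫⁻ y, t.indicator (g f) y ∂π₀ := fun f t ht => by
    rw [hκ'app, withDensity_apply _ ht, ← lintegral_indicator ht]
  -- the marginal of the observation
  have hsnd : (prior.compProd κ).map Prod.snd = π₀.withDensity w := by
    ext t ht
    rw [Measure.map_apply measurable_snd ht, hcomp,
      Measure.compProd_apply (measurable_snd ht), withDensity_apply _ ht,
      ← lintegral_indicator ht]
    have hpre : ∀ f : H, Prod.mk f ⁻¹' (Prod.snd ⁻¹' t) = t := fun _ => rfl
    calc ∫⁻ f, κ' f (Prod.mk f ⁻¹' (Prod.snd ⁻¹' t)) ∂prior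
        = ∫⁻ f, ∫⁻ y, (Prod.fst ⁻¹' t : Set (E × H)).indicator
            (fun p => g p.2 p.1) (y, f) ∂π₀ ∂prior := by
          refine lintegral_congr fun f => ?_
          rw [hpre, hκ'set f t ht]
          refine lintegral_congr fun y => ?_
          simp [Set.indicator_apply]
      _ = ∫⁻ y, ∫⁻ f, (Prod.fst ⁻¹' t : Set (E × H)).indicator
            (fun p => g p.2 p.1) (y, f) ∂prior ∂π₀ :=
          fub _ ((hgmeas.comp measurable_swap).indicator (measurable_fst ht))
      _ = ∫⁻ y, t.indicator w y ∂π₀ := by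
          refine lintegral_congr fun y => ?_
          by_cases hy : y ∈ t
          · simp only [Set.indicator_of_mem hy]
            refine lintegral_congr fun f => ?_
            simp [Set.indicator_apply, hy]
          · simp [Set.indicator_of_notMem, hy]
  -- the swapped joint law disintegrates along η
  set ρ : Measure (E × H) := (prior.compProd κ).map Prod.swap with hρdef
  have hρ : ρ = (π₀.withDensity w).compProd η := by
    ext s hs
    rw [hρdef, Measure.map_apply measurable_swap hs, hcomp,
      Measure.compProd_apply (measurable_swap hs), Measure.compProd_apply hs,
      lintegral_withDensity_eq_lintegral_mul _ hwmeas
        (Kernel.measurable_kernel_prodMk_left hs)]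
    set F : E × H → ℝ≥0∞ := s.indicator (fun p => g p.2 p.1) with hF
    have hFmeas : Measurable F := (hgmeas.comp measurable_swap).indicator hs
    calc ∫⁻ f, κ' f (Prod.mk f ⁻¹' (Prod.swap ⁻¹' s)) ∂prior
        = ∫⁻ f, ∫⁻ y, F (y, f) ∂π₀ ∂prior := by
          refine lintegral_congr fun f => ?_
          rw [hκ'set f _ (measurable_prodMk_left (measurable_swap hs))]
          refine lintegral_congr fun y => ?_
          simp [hF, Set.indicator_apply, Set.mem_preimage, Prod.swap]
      _ = ∫⁻ y, ∫⁻ f, F (y, f) ∂prior ∂π₀ := fub _ hFmeas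
      _ = ∫⁻ y, (w * fun y => η y (Prod.mk y ⁻¹' s)) y ∂π₀ := by
          refine lintegral_congr_ae ?_
          filter_upwards [hwξ, hξpos, hηη₀] with y hwy hy hηy
          have hFy : Measurable fun f => F (y, f) :=
            hFmeas.comp (measurable_const.prodMk measurable_id)
          have hind : ∀ f : H, (Prod.mk y ⁻¹' s).indicator (d y) f
              = ENNReal.ofReal (ξ y)⁻¹ * F (y, f) := by
            intro f
            by_cases hf : (y, f) ∈ s
            · simp only [Set.indicator_of_mem (show f ∈ Prod.mk y ⁻¹' s from hf), hF,
                Set.indicator_of_mem hf, hd, hg]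
              exact ENNReal.ofReal_mul (inv_nonneg.2 hy.le)
            · simp [Set.indicator_of_notMem, hf, hF,
                show f ∉ Prod.mk y ⁻¹' s from hf]
          have : η y (Prod.mk y ⁻¹' s)
              = ENNReal.ofReal (ξ y)⁻¹ * ∫⁻ f, F (y, f) ∂prior := by
            rw [hηy, withDensity_apply _ (measurable_prodMk_left hs),
              ← lintegral_indicator (measurable_prodMk_left hs)]
            rw [lintegral_congr hind]
            exact lintegral_const_mul _ hFy
          simp only [Pi.mul_apply]
          rw [this, hwy, ← mul_assoc, ← ENNReal.ofReal_mul hy.le,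
            mul_inv_cancel₀ hy.ne', ENNReal.ofReal_one, one_mul]
  -- finiteness of ρ and identification of its first marginal
  haveI : IsProbabilityMeasure ρ := by
    rw [hρdef]; exact Measure.isProbabilityMeasure_map measurable_swap.aemeasurable
  have hρfst : ρ.fst = (prior.compProd κ).map Prod.snd := by
    have h : (Prod.fst ∘ Prod.swap : H × E → E) = Prod.snd := rfl
    rw [hρdef, Measure.fst, Measure.map_map measurable_fst measurable_swap, h]
  have hdisint : ρ = ρ.fst ⊗ₘ η := by rw [hρfst, hsnd]; exact hρ
  have huniq : ∀ᵐ y ∂ρ.fst, η y = ρ.condKernel y :=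
    eq_condKernel_of_measure_eq_compProd η hdisint
  -- identify condDistrib with ρ.condKernel
  have hcd : condDistrib (Prod.fst : H × E → H) (Prod.snd : H × E → E) (prior.compProd κ)
      = ρ.condKernel := by
    rw [condDistrib_def]
    congr 1
  -- transfer the π₀-a.e. statements to ρ.fst
  have hac : ρ.fst ≪ π₀ := by
    rw [hρfst, hsnd]; exact withDensity_absolutelyContinuous _ _
  rw [← hρfst]
  filter_upwards [huniq, hac.ae_le hηη₀] with y h1 h2
  rw [hcd, ← h1, h2]
  exact ⟨withDensity_absolutelyContinuous _ _, rfl⟩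
end
end

section
/- (Feldman–Hájek shift singularity) Let μ = N(0, C) be a Gaussian measure on a separable Hilbert space H with trace-class covariance C, and let h ∈ H not belong to the Cameron–Martin space C^{1/2}(H). Then the shifted measure μ_h := N(h, C) and μ are mutually singular. -/
open MeasureTheory ProbabilityTheory Real
open scoped ENNReal RealInnerProductSpace

noncomputable section

variable {H : Type*} [NormedAddCommGroup H] [InnerProductSpace ℝ H] [CompleteSpace H]
  [SecondCountableTopology H] [MeasurableSpace H] [BorelSpace H]

open Filter
open scoped Topology

set_option maxHeartbeats 1000000

/-- If `|⟪h,x⟫| ≤ M ‖T x‖` for all `x`, `T` self-adjoint with dense range, then `h ∈ range T`. -/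
lemma mem_range_of_inner_bound (T : H →L[ℝ] H) (hTsa : IsSelfAdjoint T)
    (hdense : DenseRange ((LinearMap.range (T : H →ₗ[ℝ] H) : Submodule ℝ H).subtypeL))
    (h : H) (M : ℝ) (hb : ∀ x : H, |⟪h, x⟫| ≤ M * ‖T x‖) :
    h ∈ Set.range T := by
  have hsym := hTsa.isSymmetric
  set S : Submodule ℝ H := LinearMap.range (T : H →ₗ[ℝ] H) with hS
  have wd : ∀ x y : H, T x = T y → ⟪h, x⟫ = ⟪h, y⟫ := by
    intro x y hxy
    have : |⟪h, x - y⟫| ≤ M * ‖T (x - y)‖ := hb _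
    rw [map_sub, hxy, sub_self, norm_zero, mul_zero, abs_nonpos_iff] at this
    rw [inner_sub_right, sub_eq_zero] at this
    exact this
  have hch : ∀ y : S, T (Exists.choose y.2) = (y : H) := fun y => Exists.choose_spec y.2
  -- the functional on the range
  set φ₀ : S →ₗ[ℝ] ℝ :=
    { toFun := fun y => ⟪h, Exists.choose y.2⟫
      map_add' := by
        intro y z
        show ⟪h, Exists.choose (y + z).2⟫ = ⟪h, Exists.choose y.2⟫ + ⟪h, Exists.choose z.2⟫
        rw [wd _ (Exists.choose y.2 + Exists.choose z.2)
          (by rw [hch, map_add, hch, hch]; simp), inner_add_right]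
      map_smul' := by
        intro c y
        show ⟪h, Exists.choose (c • y).2⟫ = c * ⟪h, Exists.choose y.2⟫
        rw [wd _ (c • Exists.choose y.2)
          (by rw [hch, T.map_smul, hch]; simp), inner_smul_right] } with hφ₀
  have hφ₀b : ∀ y : S, ‖φ₀ y‖ ≤ M * ‖(y : H)‖ := by
    intro y
    calc ‖φ₀ y‖ = |⟪h, Exists.choose y.2⟫| := rfl
    _ ≤ M * ‖T (Exists.choose y.2)‖ := hb _
    _ = M * ‖(y : H)‖ := by rw [hch]
  set φ : S →L[ℝ] ℝ := LinearMap.mkContinuous φ₀ M (fun y => by simpa using hφ₀b y) with hφ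
  have h_e : IsUniformInducing (S.subtypeL) := isUniformEmbedding_subtype_val.isUniformInducing
  set ψ : H →L[ℝ] ℝ := φ.extend S.subtypeL with hψ
  set z : H := (InnerProductSpace.toDual ℝ H).symm ψ with hz
  refine ⟨z, ?_⟩
  apply ext_inner_right ℝ
  intro x
  have hTx : T x ∈ S := LinearMap.mem_range_self _ x
  have e1 := ContinuousLinearMap.extend_eq (f := φ) (e := S.subtypeL) hdense h_e ⟨T x, hTx⟩
  have e2 : φ ⟨T x, hTx⟩ = ⟪h, x⟫ := wd _ x (hch ⟨T x, hTx⟩)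
  have e3 : ∀ w : H, ⟪z, w⟫ = ψ w := fun w => InnerProductSpace.toDual_symm_apply
  have e4 : (S.subtypeL ⟨T x, hTx⟩ : H) = T x := rfl
  rw [e4] at e1
  calc ⟪T z, x⟫ = ⟪z, T x⟫ := hsym z x
  _ = ψ (T x) := e3 _
  _ = ⟪h, x⟫ := by rw [hψ, e1, e2]

lemma denseRange_sqrtAux (C sqrtC : H →L[ℝ] H) (hCinj : Function.Injective C)
    (hsqrt : sqrtC.comp sqrtC = C) (hsqrtsa : IsSelfAdjoint sqrtC) :
    DenseRange ((LinearMap.range (sqrtC : H →ₗ[ℝ] H) : Submodule ℝ H).subtypeL) := by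
  have hsym := hsqrtsa.isSymmetric
  set S : Submodule ℝ H := LinearMap.range (sqrtC : H →ₗ[ℝ] H) with hS
  have horto : Sᗮ = ⊥ := by
    rw [Submodule.eq_bot_iff]
    intro x hx
    rw [Submodule.mem_orthogonal] at hx
    have h1 : ⟪sqrtC x, sqrtC x⟫ = 0 := by
      have h0 := hx (sqrtC (sqrtC x)) (LinearMap.mem_range_self _ _)
      rw [← h0]
      exact (hsym (sqrtC x) x).symm
    rw [inner_self_eq_zero] at h1
    have h3 : C x = C 0 := by rw [← hsqrt, map_zero]; simp [ContinuousLinearMap.comp_apply, h1]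
    exact hCinj h3
  have hd : S.topologicalClosure = ⊤ := Submodule.topologicalClosure_eq_top_iff.2 horto
  have hdense : Dense (S : Set H) := by
    rw [dense_iff_closure_eq, ← Submodule.topologicalClosure_coe, hd]
    rfl
  exact hdense.denseRange_val

lemma exists_good_vector (C sqrtC : H →L[ℝ] H) (hCinj : Function.Injective C)
    (hsqrt : sqrtC.comp sqrtC = C) (hsqrtsa : IsSelfAdjoint sqrtC)
    (h : H) (hh : h ∉ Set.range sqrtC) (M : ℝ) :
    ∃ x : H, ⟪C x, x⟫ = 1 ∧ M ≤ ⟪h, x⟫ := by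
  have hsym := hsqrtsa.isSymmetric
  have hC_eq : ∀ x : H, ⟪C x, x⟫ = ‖sqrtC x‖ ^ 2 := by
    intro x
    rw [← hsqrt]
    calc ⟪sqrtC (sqrtC x), x⟫ = ⟪sqrtC x, sqrtC x⟫ := hsym _ _
    _ = ‖sqrtC x‖ ^ 2 := real_inner_self_eq_norm_sq _
  -- unboundedness of the ratio
  have hun : ∀ M' : ℝ, ∃ x : H, M' * ‖sqrtC x‖ < |⟪h, x⟫| := by
    intro M'
    by_contra hcon
    push_neg at hcon
    exact hh (mem_range_of_inner_bound sqrtC hsqrtsa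
      (denseRange_sqrtAux C sqrtC hCinj hsqrt hsqrtsa) h M' hcon)
  set M₀ : ℝ := max M 1 with hM₀
  have hM₀pos : 0 < M₀ := lt_of_lt_of_le one_pos (le_max_right _ _)
  obtain ⟨x₀, hx₀⟩ := hun M₀
  set v : ℝ := ‖sqrtC x₀‖ with hv
  have hv0 : 0 ≤ v := norm_nonneg _
  have hvpos : 0 < v := by
    rcases hv0.lt_or_eq with hlt | heq
    · exact hlt
    · exfalso
      have hT0 : sqrtC x₀ = 0 := by rwa [← heq, eq_comm, norm_eq_zero] at hv
      have hx00 : x₀ = 0 := by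
        apply hCinj
        rw [← hsqrt, map_zero, ContinuousLinearMap.comp_apply, hT0, map_zero]
      have h4 : |⟪h, x₀⟫| = 0 := by rw [hx00]; simp
      rw [h4, ← heq, mul_zero] at hx₀
      exact lt_irrefl 0 hx₀
  set c : ℝ := ⟪h, x₀⟫ with hc
  have hcabs : M₀ * v < |c| := hx₀
  set s : ℝ := if 0 ≤ c then 1 else -1 with hs
  have hsc : s * c = |c| := by
    rcases le_or_gt 0 c with hle | hlt
    · simp [hs, hle, abs_of_nonneg hle]
    · simp [hs, not_le.2 hlt, abs_of_neg hlt]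
  have hs2 : s ^ 2 = 1 := by
    rcases le_or_gt 0 c with hle | hlt
    · simp [hs, hle]
    · simp [hs, not_le.2 hlt]
  refine ⟨(s * v⁻¹) • x₀, ?_, ?_⟩
  · rw [C.map_smul, real_inner_smul_left, real_inner_smul_right, hC_eq]
    rw [← hv]
    field_simp
    nlinarith [hs2]
  · rw [real_inner_smul_right, ← hc]
    have : s * v⁻¹ * c = |c| / v := by rw [mul_comm s, mul_assoc, hsc]; ring
    rw [this]
    rw [le_div_iff₀ hvpos]
    calc M * v ≤ M₀ * v := by nlinarith [le_max_left M 1]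
    _ ≤ |c| := hcabs.le

/-- Gaussian tails vanish. -/
lemma gaussian_tail (ε : ℝ≥0∞) (hε : 0 < ε) :
    ∃ m : ℕ, gaussianReal 0 1 (Set.Ici (m : ℝ)) ≤ ε ∧
      gaussianReal 0 1 (Set.Iio (-(m : ℝ))) ≤ ε := by
  set G := gaussianReal 0 1
  have h1 : Tendsto (fun m : ℕ => G (Set.Ici (m : ℝ))) atTop (𝓝 (G (⋂ m : ℕ, Set.Ici (m : ℝ)))) :=
    tendsto_measure_iInter_atTop (fun m => measurableSet_Ici.nullMeasurableSet)
      (fun a b hab => Set.Ici_subset_Ici.2 (by exact_mod_cast hab)) ⟨0, measure_ne_top _ _⟩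
  have h2 : Tendsto (fun m : ℕ => G (Set.Iio (-(m : ℝ)))) atTop
      (𝓝 (G (⋂ m : ℕ, Set.Iio (-(m : ℝ))))) :=
    tendsto_measure_iInter_atTop (fun m => measurableSet_Iio.nullMeasurableSet)
      (fun a b hab => Set.Iio_subset_Iio (by exact_mod_cast neg_le_neg (by exact_mod_cast hab)))
      ⟨0, measure_ne_top _ _⟩
  have e1 : (⋂ m : ℕ, Set.Ici (m : ℝ)) = ∅ := by
    ext x; simp only [Set.mem_iInter, Set.mem_Ici, Set.mem_empty_iff_false, iff_false, not_forall]
    obtain ⟨n, hn⟩ := exists_nat_gt x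
    exact ⟨n, by push_neg; exact hn⟩
  have e2 : (⋂ m : ℕ, Set.Iio (-(m : ℝ))) = ∅ := by
    ext x; simp only [Set.mem_iInter, Set.mem_Iio, Set.mem_empty_iff_false, iff_false, not_forall]
    obtain ⟨n, hn⟩ := exists_nat_gt (-x)
    exact ⟨n, by push_neg; linarith⟩
  rw [e1, measure_empty] at h1
  rw [e2, measure_empty] at h2
  have := ((h1.eventually (gt_mem_nhds hε)).and (h2.eventually (gt_mem_nhds hε))).exists
  exact ⟨this.choose, this.choose_spec.1.le, this.choose_spec.2.le⟩

/-- **Feldman–Hájek shift singularity.**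
Let `μ = N(0, C)` be a Gaussian measure on a separable Hilbert space with positive
self-adjoint injective trace-class covariance `C` (with square root `√C`, whose range is the
Cameron–Martin space), and let `h ∈ H` not belong to the Cameron–Martin space `√C(H)`.
Then the shifted measure `μ_h = N(h, C)` and `μ` are mutually singular. -/
theorem feldman_hajek_shift_singularity
    (C sqrtC : H →L[ℝ] H)
    (hCsa : IsSelfAdjoint C) (hCpos : IsPositiveOp C) (hCtr : IsTraceClassOp C)
    (hCinj : Function.Injective C)
    (hsqrt : sqrtC.comp sqrtC = C) (hsqrtsa : IsSelfAdjoint sqrtC)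
    (hsqrtpos : IsPositiveOp sqrtC)
    (h : H) (hh : h ∉ Set.range sqrtC)
    (μ μh : Measure H)
    (hμ : IsGaussianMeasure μ 0 C) (hμh : IsGaussianMeasure μh h C) :
    μ.MutuallySingular μh := by
  obtain ⟨hPμ, hlμ⟩ := hμ
  obtain ⟨hPμh, hlμh⟩ := hμh
  have key : ∀ k : ℕ, ∃ A : Set H,
      MeasurableSet A ∧ μ Aᶜ ≤ (1/2 : ℝ≥0∞)^k ∧ μh A ≤ (1/2 : ℝ≥0∞)^k := by
    intro k
    have hεpos : (0:ℝ≥0∞) < (1/2)^k := ENNReal.pow_pos (by norm_num) k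
    obtain ⟨m, hm1, hm2⟩ := gaussian_tail ((1/2)^k) hεpos
    obtain ⟨x, hx1, hx2⟩ := exists_good_vector C sqrtC hCinj hsqrt hsqrtsa h hh (2 * m)
    set l : H →L[ℝ] ℝ := (InnerProductSpace.toDual ℝ H x : H →L[ℝ] ℝ) with hl
    have hlx : (InnerProductSpace.toDual ℝ H).symm l = x :=
      (InnerProductSpace.toDual ℝ H).symm_apply_apply x
    set a : ℝ := ⟪h, x⟫ with ha
    have ham : (m:ℝ) ≤ a/2 := by linarith [Nat.cast_nonneg (α := ℝ) m, hx2]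
    have hμmap : μ.map l = gaussianReal 0 1 := by
      rw [hlμ l, hlx, hx1, map_zero, Real.toNNReal_one]
    have hμhmap : μh.map l = gaussianReal a 1 := by
      rw [hlμh l, hlx, hx1, Real.toNNReal_one]
      congr 1
      rw [hl]
      exact (InnerProductSpace.toDual_apply_apply).trans (real_inner_comm h x)
    refine ⟨l ⁻¹' (Set.Iio (a/2)), measurableSet_Iio.preimage l.continuous.measurable, ?_, ?_⟩
    · have hcompl : (l ⁻¹' (Set.Iio (a/2)))ᶜ = l ⁻¹' (Set.Ici (a/2)) := by
        rw [← Set.preimage_compl, Set.compl_Iio]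
      rw [hcompl, ← Measure.map_apply l.continuous.measurable measurableSet_Ici, hμmap]
      exact le_trans (measure_mono (Set.Ici_subset_Ici.2 ham)) hm1
    · rw [← Measure.map_apply l.continuous.measurable measurableSet_Iio, hμhmap]
      have hmapa : gaussianReal a 1 = (gaussianReal 0 1).map (· + a) := by
        rw [gaussianReal_map_add_const a, zero_add]
      rw [hmapa, Measure.map_apply (measurable_add_const a) measurableSet_Iio]
      have hpre : (· + a) ⁻¹' (Set.Iio (a/2)) = Set.Iio (a/2 - a) := by
        ext t
        simp only [Set.mem_preimage, Set.mem_Iio]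
        constructor <;> intro <;> linarith
      rw [hpre]
      exact le_trans (measure_mono (Set.Iio_subset_Iio (by linarith))) hm2
  choose A hAmeas hA1 hA2 using key
  have hgeo : ∑' k : ℕ, ((1:ℝ≥0∞)/2)^k ≠ ∞ := by
    rw [ENNReal.tsum_geometric]
    simp
  have hnull1 : μ (limsup (fun k => (A k)ᶜ) atTop) = 0 :=
    measure_limsup_atTop_eq_zero (ne_top_of_le_ne_top hgeo (ENNReal.tsum_le_tsum hA1))
  have hnull2 : μh (limsup A atTop) = 0 :=
    measure_limsup_atTop_eq_zero (ne_top_of_le_ne_top hgeo (ENNReal.tsum_le_tsum hA2))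
  have hcompl : (limsup (fun k => (A k)ᶜ) atTop)ᶜ = liminf A atTop := by
    calc (limsup (fun k => (A k)ᶜ) atTop)ᶜ = ((liminf A atTop)ᶜ)ᶜ := by
          rw [Filter.liminf_compl]; rfl
    _ = liminf A atTop := compl_compl _
  refine ⟨limsup (fun k => (A k)ᶜ) atTop,
    MeasurableSet.measurableSet_limsup (fun n => (hAmeas n).compl), hnull1, ?_⟩
  rw [hcompl]
  exact le_antisymm (le_trans (measure_mono Filter.liminf_le_limsup) hnull2.le) zero_le
end
end
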